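/- Let (A, φ) be an algebraic probability space and, for each N ≥ 1, let b₁^{(N)}, …, b_N^{(N)} ∈ A be elements whose joint distribution is order invariant: φ(b_{i(1)}^{(N)} ⋯ b_{i(n)}^{(N)}) = φ(b_{j(1)}^{(N)} ⋯ b_{j(n)}^{(N)}) for all n ≥ 1 and all order-equivalent tuples i, j : {1,…,n} → {1,…,N}. Fix n ≥ 1 and assume that for every k with 1 ≤ k ≤ n and every surjection s : {1,…,n} → {1,…,k}, the limit c(s) := lim_{N→∞} N^k · φ(b_{s(1)}^{(N)} ⋯ b_{s(n)}^{(N)}) exists in ℂ (the product being defined for N ≥ k). Set S_N := b₁^{(N)} + ⋯ + b_N^{(N)}. Then lim_{N→∞} φ(S_N^n) = Σ_{k=1}^{n} (1/k!) · Σ_{s : {1,…,n} ↠ {1,…,k} surjective} c(s). -/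

import Mathlib

private theorem tendsto_choose_div_pow (k : ℕ) :
    Filter.Tendsto (fun N : ℕ => (N.choose k : ℂ) / (N : ℂ) ^ k)
      Filter.atTop (nhds (1 / (Nat.factorial k : ℂ))) := by
  have h0 : ∀ i : ℕ, Filter.Tendsto (fun N : ℕ => 1 - (i : ℂ) / (N : ℂ))
      Filter.atTop (nhds 1) := by
    intro i
    have h2 : Filter.Tendsto (fun N : ℕ => (i : ℂ) / (N : ℂ))
        Filter.atTop (nhds 0) := by
      have := (Complex.continuous_ofReal.tendsto 0).comp
        (tendsto_const_div_atTop_nhds_zero_nat (i : ℝ))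
      rw [show (fun N : ℕ => (i : ℂ) / (N : ℂ))
          = Complex.ofReal ∘ (fun n : ℕ => (i : ℝ) / (n : ℝ)) from
        funext fun N => by push_cast [Function.comp]; ring]
      simpa using this
    simpa using (tendsto_const_nhds (x := (1:ℂ))).sub h2
  have hprod : Filter.Tendsto (fun N : ℕ => ∏ i ∈ Finset.range k, (1 - (i : ℂ) / (N : ℂ)))
      Filter.atTop (nhds 1) := by
    have := tendsto_finset_prod (Finset.range k)
      (fun i _ => h0 i)
    simpa using this
  have key : Filter.Tendsto (fun N : ℕ =>
      (1 / (Nat.factorial k : ℂ)) * ∏ i ∈ Finset.range k, (1 - (i : ℂ) / (N : ℂ)))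
      Filter.atTop (nhds (1 / (Nat.factorial k : ℂ))) := by
    simpa using (tendsto_const_nhds (x := (1 / (Nat.factorial k : ℂ)))).mul hprod
  refine key.congr' ?_
  filter_upwards [Filter.eventually_ge_atTop (max k 1)] with N hN
  have hk : k ≤ N := le_trans (le_max_left _ _) hN
  have hN1 : 1 ≤ N := le_trans (le_max_right _ _) hN
  have hNne : (N : ℂ) ≠ 0 := by
    exact_mod_cast Nat.cast_ne_zero.mpr (by omega)
  have hfac : (Nat.factorial k : ℂ) ≠ 0 := by
    exact_mod_cast Nat.cast_ne_zero.mpr k.factorial_ne_zero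
  have hdesc : (N.descFactorial k : ℂ) = ∏ i ∈ Finset.range k, ((N : ℂ) - (i : ℂ)) := by
    rw [Nat.descFactorial_eq_prod_range]
    push_cast
    refine Finset.prod_congr rfl fun i hi => ?_
    have : i ≤ N := le_trans (le_of_lt (Finset.mem_range.mp hi)) hk
    push_cast [Nat.cast_sub this]
    ring
  have hchoose : (N.choose k : ℂ) = (N.descFactorial k : ℂ) / (Nat.factorial k : ℂ) := by
    have := Nat.descFactorial_eq_factorial_mul_choose N k
    field_simp
    exact_mod_cast (Nat.mul_comm _ _).trans this.symm
  rw [hchoose, hdesc]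
  have hsplit : ∏ i ∈ Finset.range k, (1 - (i : ℂ) / (N : ℂ))
      = (∏ i ∈ Finset.range k, ((N : ℂ) - (i : ℂ))) / (N : ℂ) ^ k := by
    have hpow : ((N : ℂ)) ^ k = ∏ _i ∈ Finset.range k, (N : ℂ) := by
      rw [Finset.prod_const, Finset.card_range]
    rw [hpow, ← Finset.prod_div_distrib]
    exact Finset.prod_congr rfl fun i _ => by field_simp
  rw [hsplit]
  ring

private theorem expand_pow {A : Type*} [Ring A] (x : ℕ → A) (S : Finset ℕ) :
    ∀ m : ℕ, (∑ i ∈ S, x i) ^ m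
      = ∑ f ∈ Fintype.piFinset (fun _ : Fin m => S), (List.ofFn fun l => x (f l)).prod := by
  intro m
  induction m with
  | zero =>
      rw [pow_zero]
      rw [Fintype.piFinset_of_isEmpty]
      simp
  | succ m ih =>
      rw [pow_succ', ih, Finset.sum_mul_sum]
      rw [← Finset.sum_product']
      refine Finset.sum_bij' (fun p _ => Fin.cons p.1 p.2)
        (fun f _ => (f 0, Fin.tail f)) ?_ ?_ ?_ ?_ ?_
      · rintro ⟨i, g⟩ hp
        rw [Finset.mem_product] at hp
        rw [Fintype.mem_piFinset]
        intro a
        refine Fin.cases ?_ ?_ a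
        · simpa using hp.1
        · intro l
          simpa using Fintype.mem_piFinset.mp hp.2 l
      · intro f hf
        rw [Finset.mem_product]
        rw [Fintype.mem_piFinset] at hf
        exact ⟨hf 0, Fintype.mem_piFinset.mpr fun l => hf l.succ⟩
      · rintro ⟨i, g⟩ hp
        simp [Fin.tail_cons]
      · intro f hf
        simp [Fin.cons_self_tail]
      · rintro ⟨i, g⟩ hp
        simp only
        rw [List.ofFn_succ]
        simp [Fin.cons_zero, Fin.cons_succ]

private def enum0 (T : Finset ℕ) (i : ℕ) : ℕ := (T.sort (· ≤ ·)).getD i 0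

private theorem enum0_eq (T : Finset ℕ) {k : ℕ} (h : T.card = k) (i : Fin k) :
    enum0 T i = T.orderEmbOfFin h i := by
  rw [Finset.orderEmbOfFin_apply, enum0]
  have hlen : (i : ℕ) < (T.sort (· ≤ ·)).length := by
    rw [Finset.length_sort, h]; exact i.2
  rw [List.getD_eq_getElem _ _ hlen]
  simp [Fin.getElem_fin]

private theorem sigma_eq' {n : ℕ} {k1 k2 : ℕ} {s1 : Fin n → Fin k1} {s2 : Fin n → Fin k2}
    {T1 T2 : Finset ℕ} (hk : k1 = k2) (hT : T1 = T2) (hs : ∀ l, (s1 l : ℕ) = (s2 l : ℕ)) :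
    (⟨k1, (s1, T1)⟩ : (k : ℕ) × ((Fin n → Fin k) × Finset ℕ)) = ⟨k2, (s2, T2)⟩ := by
  subst hk; subst hT
  have : s1 = s2 := funext fun l => Fin.ext (hs l)
  rw [this]

private theorem group_by_pattern {M : Type*} [AddCommMonoid M]
    (n N : ℕ) (hn : 1 ≤ n) (F : (Fin n → ℕ) → M) :
    ∑ f ∈ Fintype.piFinset (fun _ : Fin n => Finset.Icc 1 N), F f
      = ∑ k ∈ Finset.Icc 1 n,
          ∑ s ∈ Finset.univ.filter (fun s : Fin n → Fin k => Function.Surjective s),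
            ∑ T ∈ (Finset.Icc 1 N).powersetCard k, F (fun l => enum0 T (s l)) := by
  have hrw : ∀ k ∈ Finset.Icc 1 n,
      (∑ s ∈ Finset.univ.filter (fun s : Fin n → Fin k => Function.Surjective s),
        ∑ T ∈ (Finset.Icc 1 N).powersetCard k, F (fun l => enum0 T (s l)))
      = ∑ p ∈ (Finset.univ.filter (fun s : Fin n → Fin k => Function.Surjective s))
            ×ˢ (Finset.Icc 1 N).powersetCard k, F (fun l => enum0 p.2 (p.1 l)) := by
    intro k _
    rw [Finset.sum_product]
  rw [Finset.sum_congr rfl hrw, Finset.sum_sigma']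
  refine Finset.sum_bij'
    (fun f hf => (⟨(Finset.image f Finset.univ).card,
      (fun l => ((Finset.image f Finset.univ).orderIsoOfFin rfl).symm
          ⟨f l, Finset.mem_image_of_mem f (Finset.mem_univ l)⟩,
        Finset.image f Finset.univ)⟩ :
      (k : ℕ) × ((Fin n → Fin k) × Finset ℕ)))
    (fun x _ => fun l => enum0 x.2.2 (x.2.1 l)) ?_ ?_ ?_ ?_ ?_
  · -- maps into sigma set
    intro f hf
    rw [Fintype.mem_piFinset] at hf
    rw [Finset.mem_sigma]
    constructor
    · rw [Finset.mem_Icc]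
      constructor
      · rw [Nat.one_le_iff_ne_zero, ← Nat.pos_iff_ne_zero, Finset.card_pos]
        exact ⟨f ⟨0, hn⟩, Finset.mem_image_of_mem f (Finset.mem_univ _)⟩
      · exact le_trans (Finset.card_image_le (s := Finset.univ) (f := f)) (by simp)
    · rw [Finset.mem_product]
      constructor
      · rw [Finset.mem_filter]
        refine ⟨Finset.mem_univ _, ?_⟩
        dsimp only
        intro y
        set iso := (Finset.image f Finset.univ).orderIsoOfFin rfl with hiso
        obtain ⟨l, -, hl⟩ := Finset.mem_image.mp (iso y).2
        refine ⟨l, ?_⟩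
        show iso.symm ⟨f l, Finset.mem_image_of_mem f (Finset.mem_univ l)⟩ = y
        rw [show (⟨f l, Finset.mem_image_of_mem f (Finset.mem_univ l)⟩ :
            {a // a ∈ Finset.image f Finset.univ}) = iso y from Subtype.ext hl]
        rw [OrderIso.symm_apply_apply]
      · rw [Finset.mem_powersetCard]
        refine ⟨fun a ha => ?_, rfl⟩
        obtain ⟨l, -, hl⟩ := Finset.mem_image.mp ha
        exact hl ▸ hf l
  · -- inverse maps into piFinset
    rintro ⟨k, s, T⟩ hx
    rw [Finset.mem_sigma, Finset.mem_product, Finset.mem_powersetCard] at hx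
    obtain ⟨hk, ⟨hs, hT, hTcard⟩⟩ := hx
    rw [Fintype.mem_piFinset]
    intro l
    dsimp only
    rw [enum0_eq T hTcard (s l)]
    exact hT (Finset.orderEmbOfFin_mem T hTcard (s l))
  · -- left inverse
    intro f hf
    funext l
    dsimp only
    rw [enum0_eq _ rfl]
    rw [← Finset.coe_orderIsoOfFin_apply, OrderIso.apply_symm_apply]
  · -- right inverse
    rintro ⟨k, s, T⟩ hx
    rw [Finset.mem_sigma, Finset.mem_product, Finset.mem_powersetCard] at hx
    obtain ⟨hk, ⟨hs, hT, hTcard⟩⟩ := hx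
    rw [Finset.mem_filter] at hs
    have hsurj : Function.Surjective s := hs.2
    dsimp only at hTcard ⊢
    set g : Fin n → ℕ := fun l => enum0 T (s l) with hgdef
    have hg : ∀ l, g l = T.orderEmbOfFin hTcard (s l) :=
      fun l => enum0_eq T hTcard (s l)
    have himg : Finset.image g Finset.univ = T := by
      ext a
      simp only [Finset.mem_image]
      constructor
      · rintro ⟨l, -, rfl⟩
        rw [hg l]
        exact Finset.orderEmbOfFin_mem T hTcard (s l)
      · intro ha
        have : a ∈ Set.range (T.orderEmbOfFin hTcard) := by
          rw [Finset.range_orderEmbOfFin]; exact ha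
        obtain ⟨i, hi⟩ := this
        obtain ⟨l, hl⟩ := hsurj i
        exact ⟨l, Finset.mem_univ l, by rw [hg l, hl, hi]⟩
    have h' : (Finset.image g Finset.univ).card = k := by rw [himg]; exact hTcard
    have hembeq : T.orderEmbOfFin hTcard
        = (Finset.image g Finset.univ).orderEmbOfFin h' := by
      refine Finset.orderEmbOfFin_unique' h' fun x => ?_
      rw [himg]
      exact Finset.orderEmbOfFin_mem T hTcard x
    refine sigma_eq' h' himg fun l => ?_
    have he1 : (Finset.image g Finset.univ).orderEmbOfFin rfl
        (((Finset.image g Finset.univ).orderIsoOfFin rfl).symm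
          ⟨g l, Finset.mem_image_of_mem g (Finset.mem_univ l)⟩) = g l := by
      rw [← Finset.coe_orderIsoOfFin_apply, OrderIso.apply_symm_apply]
    have he2 : g l = (Finset.image g Finset.univ).orderEmbOfFin h' (s l) := by
      rw [hg l, hembeq]
    exact Finset.orderEmbOfFin_eq_orderEmbOfFin_iff.mp (he1.trans he2)
  · -- function values agree
    intro f hf
    congr 1
    funext l
    dsimp only
    rw [enum0_eq _ rfl]
    rw [← Finset.coe_orderIsoOfFin_apply, OrderIso.apply_symm_apply]

/-- Limit theorem for order invariant distributions. Given, for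
each `N ≥ 1`, elements `b₁^{(N)}, …, b_N^{(N)}` of an algebraic probability
space `(A, φ)` whose joint distribution is order invariant, and assuming that
for every `1 ≤ k ≤ n` and every surjection `s : {1,…,n} → {1,…,k}` the limit
`c(s) = lim_N N^k φ(b_{s(1)}^{(N)} ⋯ b_{s(n)}^{(N)})` exists, the moments of
`S_N = b₁^{(N)} + ⋯ + b_N^{(N)}` satisfy
`lim_N φ(S_N^n) = Σ_{k=1}^n (1/k!) Σ_{s surjective} c(s)`.
Here `b N i` denotes `b_i^{(N)}` (with `1 ≤ i ≤ N` the meaningful range). -/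
theorem limit_theorem_order_invariant
    {A : Type*} [Ring A] [Algebra ℂ A]
    (φ : A →ₗ[ℂ] ℂ) (hφ1 : φ 1 = 1)
    (b : ℕ → ℕ → A)
    -- order invariance of the joint distribution
    (horder : ∀ (m N : ℕ), 1 ≤ m → ∀ i j : Fin m → ℕ,
      (∀ l, 1 ≤ i l ∧ i l ≤ N) → (∀ l, 1 ≤ j l ∧ j l ≤ N) →
      (∀ p q : Fin m, i p ≤ i q ↔ j p ≤ j q) →
      φ (List.ofFn fun l => b N (i l)).prod
        = φ (List.ofFn fun l => b N (j l)).prod)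
    (n : ℕ) (hn : 1 ≤ n)
    -- the limits c(s) exist (s : {1,…,n} ↠ {1,…,k}, written 0-based as
    -- `s : Fin n → Fin k` and shifted by 1 when indexing b)
    (c : (k : ℕ) → (Fin n → Fin k) → ℂ)
    (hc : ∀ k : ℕ, 1 ≤ k → k ≤ n → ∀ s : Fin n → Fin k,
      Function.Surjective s →
      Filter.Tendsto (fun N : ℕ =>
          (N : ℂ) ^ k * φ (List.ofFn fun l => b N ((s l : ℕ) + 1)).prod)
        Filter.atTop (nhds (c k s))) :
    Filter.Tendsto (fun N : ℕ => φ ((∑ i ∈ Finset.Icc 1 N, b N i) ^ n))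
      Filter.atTop
      (nhds (∑ k ∈ Finset.Icc 1 n, (1 / (Nat.factorial k : ℂ)) *
        ∑ s ∈ Finset.univ.filter
            (fun s : Fin n → Fin k => Function.Surjective s), c k s)) := by
  classical
  set R : ℕ → (k : ℕ) → (Fin n → Fin k) → ℂ :=
    fun N k s => φ (List.ofFn fun l => b N ((s l : ℕ) + 1)).prod with hR
  have key : ∀ N : ℕ, n ≤ N →
      φ ((∑ i ∈ Finset.Icc 1 N, b N i) ^ n)
        = ∑ k ∈ Finset.Icc 1 n,
            ∑ s ∈ Finset.univ.filter (fun s : Fin n → Fin k => Function.Surjective s),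
              (N.choose k : ℂ) * R N k s := by
    intro N hN
    rw [expand_pow (b N) (Finset.Icc 1 N) n, map_sum]
    rw [group_by_pattern n N hn (fun f => φ (List.ofFn fun l => b N (f l)).prod)]
    refine Finset.sum_congr rfl fun k hk => Finset.sum_congr rfl fun s hs => ?_
    rw [Finset.mem_Icc] at hk
    rw [Finset.mem_filter] at hs
    have hconst : ∀ T ∈ (Finset.Icc 1 N).powersetCard k,
        φ (List.ofFn fun l => b N (enum0 T (s l))).prod = R N k s := by
      intro T hT
      rw [Finset.mem_powersetCard] at hT
      obtain ⟨hTsub, hTcard⟩ := hT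
      refine horder n N hn (fun l => enum0 T (s l)) (fun l => (s l : ℕ) + 1) ?_ ?_ ?_
      · intro l
        have hm : enum0 T (s l) ∈ Finset.Icc 1 N := by
          rw [enum0_eq T hTcard (s l)]
          exact hTsub (Finset.orderEmbOfFin_mem T hTcard (s l))
        rw [Finset.mem_Icc] at hm
        exact hm
      · intro l
        have h1 := (s l).2
        have h2 : k ≤ n := hk.2
        omega
      · intro p q
        rw [enum0_eq T hTcard (s p), enum0_eq T hTcard (s q)]
        rw [(T.orderEmbOfFin hTcard).le_iff_le]
        rw [Fin.le_def]
        omega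
    rw [Finset.sum_congr rfl hconst, Finset.sum_const, Finset.card_powersetCard,
      Nat.card_Icc]
    simp [nsmul_eq_mul]
  have hlim : ∀ k ∈ Finset.Icc 1 n,
      ∀ s ∈ Finset.univ.filter (fun s : Fin n → Fin k => Function.Surjective s),
      Filter.Tendsto (fun N : ℕ => (N.choose k : ℂ) * R N k s) Filter.atTop
        (nhds ((1 / (Nat.factorial k : ℂ)) * c k s)) := by
    intro k hk s hs
    rw [Finset.mem_Icc] at hk
    rw [Finset.mem_filter] at hs
    have h1 := hc k hk.1 hk.2 s hs.2
    have h2 := (tendsto_choose_div_pow k).mul h1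
    refine h2.congr' ?_
    filter_upwards [Filter.eventually_ge_atTop 1] with N hN1
    have hNne : ((N : ℂ)) ≠ 0 := Nat.cast_ne_zero.mpr (by omega)
    have hpow : ((N : ℂ)) ^ k ≠ 0 := pow_ne_zero _ hNne
    field_simp
    ring
  have main := tendsto_finset_sum (Finset.Icc 1 n) (fun k hk =>
    tendsto_finset_sum
      (Finset.univ.filter (fun s : Fin n → Fin k => Function.Surjective s))
      (fun s hs => hlim k hk s hs))
  have htarget : (∑ k ∈ Finset.Icc 1 n, (1 / (Nat.factorial k : ℂ)) *
        ∑ s ∈ Finset.univ.filter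
            (fun s : Fin n → Fin k => Function.Surjective s), c k s)
      = ∑ k ∈ Finset.Icc 1 n,
          ∑ s ∈ Finset.univ.filter
            (fun s : Fin n → Fin k => Function.Surjective s),
            (1 / (Nat.factorial k : ℂ)) * c k s := by
    exact Finset.sum_congr rfl fun k _ => Finset.mul_sum _ _ _
  rw [htarget]
  refine main.congr' ?_
  filter_upwards [Filter.eventually_ge_atTop n] with N hN
  exact (key N hN).symm
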